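/- Let p be a prime and let a, b, c, d be nonnegative integers with 0 ≤ b ≤ p−1 and 0 ≤ d ≤ p−1. Then the Delannoy numbers satisfy the Lucas-type congruence D(ap+b, cp+d) ≡ D(a,c) · D(b,d) (mod p). -/

import Mathlib

open Finset

/-- The Delannoy number `D(h,k) = Σ_{j=0}^{h} binom(k,j) binom(h+k−j,k)`. -/
def delannoy (h k : ℕ) : ℕ :=
  ∑ j ∈ Finset.range (h + 1), k.choose j * (h + k - j).choose k

/-- The alternative form `Σ_j C(h,j) C(k,j) 2^j`, with a flexible summation range. -/
lemma delannoy_aux_sum_indep (h k : ℕ) {m n : ℕ} (hmn : m ≤ n) (hm : h ≤ m ∨ k ≤ m) :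
    ∑ j ∈ Finset.range (n + 1), h.choose j * (k.choose j * 2 ^ j)
      = ∑ j ∈ Finset.range (m + 1), h.choose j * (k.choose j * 2 ^ j) := by
  refine (Finset.sum_subset (Finset.range_subset_range.2 (by omega)) ?_).symm
  intro j hj hj'
  simp only [Finset.mem_range, not_lt] at hj hj'
  rcases hm with hm | hm
  · rw [Nat.choose_eq_zero_of_lt (show h < j by omega), zero_mul]
  · rw [Nat.choose_eq_zero_of_lt (show k < j by omega), zero_mul, mul_zero]

lemma delannoy_eq (h k : ℕ) :
    delannoy h k = ∑ j ∈ Finset.range (h + 1), h.choose j * (k.choose j * 2 ^ j) := by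
  have step1 : ∀ i ∈ Finset.range (h + 1),
      k.choose i * (h + k - i).choose k
        = ∑ u ∈ Finset.range (k + 1), k.choose i * (h.choose u * (k - i).choose (k - u)) := by
    intro i _
    rcases le_or_gt i k with hik | hik
    · rw [← Finset.mul_sum]
      congr 1
      have hhk : h + k - i = h + (k - i) := by omega
      rw [hhk, Nat.add_choose_eq, Finset.Nat.sum_antidiagonal_eq_sum_range_succ_mk]
    · rw [Nat.choose_eq_zero_of_lt hik]
      simp
  rw [delannoy, Finset.sum_congr rfl step1, Finset.sum_comm]
  have step2 : ∀ u ∈ Finset.range (k + 1),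
      (∑ i ∈ Finset.range (h + 1), k.choose i * (h.choose u * (k - i).choose (k - u)))
        = h.choose u * (k.choose u * 2 ^ u) := by
    intro u hu
    rw [Finset.mem_range] at hu
    have key : ∀ i, k.choose i * (k - i).choose (k - u) = k.choose u * u.choose i := by
      intro i
      rcases le_or_gt i u with hiu | hiu
      · rw [Nat.choose_mul (n := k) hiu]
        congr 1
        rw [← Nat.choose_symm (show u - i ≤ k - i by omega)]
        congr 1
        omega
      · rw [Nat.choose_eq_zero_of_lt hiu, mul_zero]
        rcases le_or_gt i k with hik | hik
        · rw [Nat.choose_eq_zero_of_lt (show k - i < k - u by omega), mul_zero]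
        · rw [Nat.choose_eq_zero_of_lt hik, zero_mul]
    have : (∑ i ∈ Finset.range (h + 1), k.choose i * (h.choose u * (k - i).choose (k - u)))
        = h.choose u * (k.choose u * ∑ i ∈ Finset.range (h + 1), u.choose i) := by
      rw [Finset.mul_sum, Finset.mul_sum]
      refine Finset.sum_congr rfl fun i _ => ?_
      rw [mul_left_comm]
      congr 1
      exact key i
    rw [this]
    rcases le_or_gt u h with huh | huh
    · congr 2
      rw [← Nat.sum_range_choose u]
      refine (Finset.sum_subset (Finset.range_subset_range.2 (by omega)) ?_).symm
      intro i hi hi'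
      simp only [Finset.mem_range, not_lt] at hi hi'
      exact Nat.choose_eq_zero_of_lt (by omega)
    · rw [Nat.choose_eq_zero_of_lt huh, zero_mul, zero_mul]
  rw [Finset.sum_congr rfl step2]
  calc ∑ u ∈ Finset.range (k + 1), h.choose u * (k.choose u * 2 ^ u)
      = ∑ u ∈ Finset.range (h + k + 1), h.choose u * (k.choose u * 2 ^ u) :=
        (delannoy_aux_sum_indep h k (Nat.le_add_left k h) (Or.inr le_rfl)).symm
    _ = ∑ u ∈ Finset.range (h + 1), h.choose u * (k.choose u * 2 ^ u) :=
        delannoy_aux_sum_indep h k (Nat.le_add_right h k) (Or.inl le_rfl)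

/-- Splitting a sum over `range (n * p)` into blocks. -/
lemma sum_range_mul_eq {M : Type*} [AddCommMonoid M] (f : ℕ → M) (n q : ℕ) :
    ∑ j ∈ Finset.range (n * q), f j
      = ∑ i ∈ Finset.range n, ∑ r ∈ Finset.range q, f (i * q + r) := by
  induction n with
  | zero => simp
  | succ n ih =>
    rw [show (n + 1) * q = n * q + q by ring, Finset.sum_range_add, ih,
      Finset.sum_range_succ]

theorem delannoy_lucas (p : ℕ) (hp : p.Prime) (a b c d : ℕ)
    (hb : b ≤ p - 1) (hd : d ≤ p - 1) :
    delannoy (a * p + b) (c * p + d) ≡ delannoy a c * delannoy b d [MOD p] := by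
  haveI : Fact p.Prime := ⟨hp⟩
  have hp2 := hp.two_le
  have hbp : b < p := by omega
  have hdp : d < p := by omega
  rw [← ZMod.natCast_eq_natCast_iff]
  push_cast
  rw [delannoy_eq, delannoy_eq, delannoy_eq]
  have lucas : ∀ n k : ℕ, ((n.choose k : ℕ) : ZMod p)
      = (((n % p).choose (k % p) : ℕ) : ZMod p) * (((n / p).choose (k / p) : ℕ) : ZMod p) := by
    intro n k
    have h := Choose.choose_modEq_choose_mod_mul_choose_div_nat (n := n) (k := k) (p := p)
    rw [← ZMod.natCast_eq_natCast_iff] at h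
    push_cast at h
    exact h
  have hdigit : ∀ x v : ℕ, v < p → (x * p + v) % p = v ∧ (x * p + v) / p = x := by
    intro x v hv
    constructor
    · rw [Nat.add_comm, Nat.add_mul_mod_self_right, Nat.mod_eq_of_lt hv]
    · rw [Nat.add_comm, Nat.add_mul_div_right _ _ hp.pos, Nat.div_eq_of_lt hv, Nat.zero_add]
  -- extend the sum to range ((a+1)*p)
  have hext : ∑ j ∈ Finset.range (a * p + b + 1),
        ((a * p + b).choose j : ZMod p) * (((c * p + d).choose j : ZMod p) * (2 : ZMod p) ^ j)
      = ∑ j ∈ Finset.range ((a + 1) * p),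
        ((a * p + b).choose j : ZMod p) * (((c * p + d).choose j : ZMod p) * (2 : ZMod p) ^ j) := by
    refine Finset.sum_subset (Finset.range_subset_range.2 (by nlinarith)) ?_
    intro j hj hj'
    simp only [Finset.mem_range, not_lt] at hj hj'
    rw [Nat.choose_eq_zero_of_lt (by omega)]
    push_cast
    rw [zero_mul]
  push_cast at hext ⊢
  rw [hext, sum_range_mul_eq (fun j => ((a * p + b).choose j : ZMod p)
      * (((c * p + d).choose j : ZMod p) * (2 : ZMod p) ^ j)) (a + 1) p]
  have hterm : ∀ q ∈ Finset.range (a + 1), ∀ r ∈ Finset.range p,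
      ((a * p + b).choose (q * p + r) : ZMod p)
          * (((c * p + d).choose (q * p + r) : ZMod p) * (2 : ZMod p) ^ (q * p + r))
        = ((a.choose q : ZMod p) * ((c.choose q : ZMod p) * (2 : ZMod p) ^ q))
          * ((b.choose r : ZMod p) * ((d.choose r : ZMod p) * (2 : ZMod p) ^ r)) := by
    intro q _ r hr
    rw [Finset.mem_range] at hr
    have h1 := lucas (a * p + b) (q * p + r)
    have h2 := lucas (c * p + d) (q * p + r)
    rw [(hdigit a b hbp).1, (hdigit a b hbp).2, (hdigit q r hr).1, (hdigit q r hr).2] at h1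
    rw [(hdigit c d hdp).1, (hdigit c d hdp).2, (hdigit q r hr).1, (hdigit q r hr).2] at h2
    -- (casts already in the right form)
    rw [h1, h2]
    have h3 : (2 : ZMod p) ^ (q * p + r) = (2 : ZMod p) ^ q * (2 : ZMod p) ^ r := by
      rw [pow_add, pow_mul, ZMod.pow_card]
    rw [h3]
    ring
  rw [Finset.sum_congr rfl (fun q hq => Finset.sum_congr rfl (hterm q hq))]
  have : ∑ q ∈ Finset.range (a + 1), ∑ r ∈ Finset.range p,
      ((a.choose q : ZMod p) * ((c.choose q : ZMod p) * (2 : ZMod p) ^ q))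
        * ((b.choose r : ZMod p) * ((d.choose r : ZMod p) * (2 : ZMod p) ^ r))
      = (∑ q ∈ Finset.range (a + 1), (a.choose q : ZMod p) * ((c.choose q : ZMod p) * (2 : ZMod p) ^ q))
        * (∑ r ∈ Finset.range p, (b.choose r : ZMod p) * ((d.choose r : ZMod p) * (2 : ZMod p) ^ r)) := by
    rw [Finset.sum_mul_sum]
  rw [this]
  congr 1
  refine (Finset.sum_subset (Finset.range_subset_range.2 (by omega)) ?_).symm
  intro r hr hr'
  simp only [Finset.mem_range, not_lt] at hr hr'
  rw [Nat.choose_eq_zero_of_lt (by omega)]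
  push_cast
  rw [zero_mul]
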